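/- Let T be a proper infinite rooted tree and let ρ be a density on T. Then the sequence n ↦ ℓ_ρ(Γ_n) is non-decreasing and lim_{n→∞} ℓ_ρ(Γ_n) = ℓ_ρ(Γ_∞), where both sides are taken in the extended nonnegative reals [0,∞]. -/

import Mathlib

open scoped ENNReal NNReal

/-- A proper infinite rooted tree, modeled as a prefix-closed set of finite lists of
naturals in which every node has at least one and finitely many children. -/
structure PTree where
  mem : List ℕ → Prop
  root_mem : mem []
  prefix_closed : ∀ ⦃l₁ l₂ : List ℕ⦄, l₁ <+: l₂ → mem l₂ → mem l₁
  child_exists : ∀ ⦃l⦄, mem l → ∃ a, mem (l ++ [a])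
  finite_children : ∀ ⦃l⦄, mem l → {a : ℕ | mem (l ++ [a])}.Finite

/-- The initial segment of length `n` of `f : ℕ → ℕ`, as a list. -/
def seg (f : ℕ → ℕ) (n : ℕ) : List ℕ := (List.range n).map f

namespace PTree

variable (T : PTree)

/-- The edges of the tree: the nonempty lists in `T`. -/
def Edge : Type := {e : List ℕ // T.mem e ∧ e ≠ []}

/-- The family `Γ_∞` of infinite descending paths: functions all of whose
finite initial segments lie in `T`. -/
def GammaInf : Set (ℕ → ℕ) := {f | ∀ n, T.mem (seg f n)}

/-- `ρ`-length of the infinite descending path determined by `f`: the sum of `ρ`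
over the nonempty initial segments of `f`. -/
noncomputable def lenInf (ρ : List ℕ → ℝ≥0) (f : ℕ → ℕ) : ℝ≥0∞ :=
  ∑' n : ℕ, (ρ (seg f (n + 1)) : ℝ≥0∞)

/-- `ρ`-length of the finite descending path `γ_e` consisting of the nonempty
prefixes of the edge `e`. -/
noncomputable def lenFin (ρ : List ℕ → ℝ≥0) (e : List ℕ) : ℝ≥0∞ :=
  ∑ k ∈ Finset.range e.length, (ρ (e.take (k + 1)) : ℝ≥0∞)

/-- Admissible densities for the family `Γ_n` (identified with the shell `S_n`). -/
def AdmFin (n : ℕ) : Set (List ℕ → ℝ≥0) :=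
  {ρ | ∀ e : List ℕ, T.mem e → e.length = n → 1 ≤ lenFin ρ e}

/-- Admissible densities for the family `Γ_∞`. -/
def AdmInf : Set (List ℕ → ℝ≥0) :=
  {ρ | ∀ f ∈ T.GammaInf, 1 ≤ lenInf ρ f}

/-- The `p`-energy of a density `ρ` with respect to the weight `σ`. -/
noncomputable def energy (p : ℝ) (σ ρ : List ℕ → ℝ≥0) : ℝ≥0∞ :=
  ∑' e : T.Edge, (σ e.1 : ℝ≥0∞) * (ρ e.1 : ℝ≥0∞) ^ p

/-- The `∞`-energy of a density `ρ` with respect to the weight `σ`. -/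
noncomputable def energyTop (σ ρ : List ℕ → ℝ≥0) : ℝ≥0∞ :=
  ⨆ e : T.Edge, (σ e.1 : ℝ≥0∞) * (ρ e.1 : ℝ≥0∞)

/-- The `p`-modulus of the family `Γ_n`. -/
noncomputable def ModFin (p : ℝ) (σ : List ℕ → ℝ≥0) (n : ℕ) : ℝ≥0∞ :=
  ⨅ ρ ∈ T.AdmFin n, T.energy p σ ρ

/-- The `p`-modulus of the family `Γ_∞`. -/
noncomputable def ModInf (p : ℝ) (σ : List ℕ → ℝ≥0) : ℝ≥0∞ :=
  ⨅ ρ ∈ T.AdmInf, T.energy p σ ρ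

/-- The `∞`-modulus of the family `Γ_∞`. -/
noncomputable def ModTop (σ : List ℕ → ℝ≥0) : ℝ≥0∞ :=
  ⨅ ρ ∈ T.AdmInf, T.energyTop σ ρ

end PTree

namespace PTree

variable (T : PTree)

/-- The `ρ`-length of the family `Γ_n`: the infimum of the `ρ`-lengths of the
descending paths terminating at an edge of the shell `S_n`. -/
noncomputable def lenFam (ρ : List ℕ → ℝ≥0) (n : ℕ) : ℝ≥0∞ :=
  ⨅ e ∈ {l : List ℕ | T.mem l ∧ l.length = n}, lenFin ρ e

/-- The `ρ`-length of the family `Γ_∞`. -/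
noncomputable def lenFamInf (ρ : List ℕ → ℝ≥0) : ℝ≥0∞ :=
  ⨅ f ∈ T.GammaInf, lenInf ρ f

end PTree


section Aux

open List Finset

variable (T : PTree) (ρ : List ℕ → ℝ≥0)

lemma lenFin_le_of_prefix {e₁ e₂ : List ℕ} (h : e₁ <+: e₂) :
    PTree.lenFin ρ e₁ ≤ PTree.lenFin ρ e₂ := by
  unfold PTree.lenFin
  calc ∑ k ∈ Finset.range e₁.length, (ρ (e₁.take (k+1)) : ℝ≥0∞)
      = ∑ k ∈ Finset.range e₁.length, (ρ (e₂.take (k+1)) : ℝ≥0∞) := by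
        refine Finset.sum_congr rfl fun k hk => ?_
        rw [Finset.mem_range] at hk
        congr 2
        conv_lhs => rw [List.prefix_iff_eq_take.mp h]
        rw [List.take_take]
        congr 1
        omega
    _ ≤ _ := Finset.sum_le_sum_of_subset (Finset.range_subset_range.mpr h.length_le)

lemma seg_length (f : ℕ → ℕ) (n : ℕ) : (seg f n).length = n := by simp [seg]

lemma seg_take (f : ℕ → ℕ) {m n : ℕ} (h : m ≤ n) : (seg f n).take m = seg f m := by
  simp [seg, ← List.map_take, List.take_range, Nat.min_eq_left h]

lemma lenFin_seg (f : ℕ → ℕ) (n : ℕ) :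
    PTree.lenFin ρ (seg f n) = ∑ k ∈ Finset.range n, (ρ (seg f (k + 1)) : ℝ≥0∞) := by
  unfold PTree.lenFin
  rw [seg_length]
  refine Finset.sum_congr rfl fun k hk => ?_
  rw [Finset.mem_range] at hk
  rw [seg_take _ (by omega)]

lemma lenInf_eq_iSup (f : ℕ → ℕ) :
    PTree.lenInf ρ f = ⨆ n, PTree.lenFin ρ (seg f n) := by
  rw [PTree.lenInf, ENNReal.tsum_eq_iSup_nat]
  exact iSup_congr fun n => (lenFin_seg ρ f n).symm

lemma prefix_succ_exists {e e' : List ℕ} (h : e <+: e') (hl : e.length < e'.length) :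
    ∃ a, e ++ [a] <+: e' := by
  obtain ⟨t, rfl⟩ := h
  have ht : t ≠ [] := by rintro rfl; simp at hl
  exact ⟨t.head ht, t.tail, by
    rw [List.append_assoc, List.singleton_append, List.cons_head_tail]⟩

lemma shell_nonempty (n : ℕ) : ∃ e, T.mem e ∧ e.length = n := by
  induction n with
  | zero => exact ⟨[], T.root_mem, rfl⟩
  | succ n ih =>
    obtain ⟨e, he, hl⟩ := ih
    obtain ⟨a, ha⟩ := T.child_exists he
    exact ⟨e ++ [a], ha, by simp [hl]⟩

lemma shell_finite (n : ℕ) : {l : List ℕ | T.mem l ∧ l.length = n}.Finite := by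
  induction n with
  | zero =>
    refine Set.Finite.subset (Set.finite_singleton []) ?_
    rintro l ⟨-, hl⟩
    simpa using List.length_eq_zero_iff.mp hl
  | succ n ih =>
    refine Set.Finite.subset
      (ih.biUnion fun e he => (T.finite_children he.1).image fun a => e ++ [a]) ?_
    rintro l ⟨hm, hl⟩
    have hpre : l.take n <+: l := List.take_prefix _ _
    have hlen : (l.take n).length = n := by simp [hl]
    obtain ⟨a, ha⟩ := prefix_succ_exists hpre (by omega)
    have heq : l.take n ++ [a] = l := ha.eq_of_length (by simp [hl, hlen])
    refine Set.mem_biUnion (x := l.take n) ⟨T.prefix_closed hpre hm, hlen⟩ ?_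
    exact ⟨a, show T.mem (l.take n ++ [a]) by rw [heq]; exact hm, heq⟩

lemma lenFam_le {n : ℕ} {e : List ℕ} (he : T.mem e) (hl : e.length = n) :
    T.lenFam ρ n ≤ PTree.lenFin ρ e :=
  biInf_le _ ⟨he, hl⟩

lemma lenFam_mono : Monotone (T.lenFam ρ) := by
  intro m n hmn
  refine le_iInf₂ fun e he => ?_
  obtain ⟨hm, hl⟩ := he
  refine le_trans (lenFam_le T ρ (T.prefix_closed (List.take_prefix m e) hm)
    (by simp [List.length_take, hl, Nat.min_eq_left hmn])) ?_
  exact lenFin_le_of_prefix ρ (List.take_prefix m e)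

lemma exists_min_shell (n : ℕ) :
    ∃ e, T.mem e ∧ e.length = n ∧ PTree.lenFin ρ e ≤ T.lenFam ρ n := by
  obtain ⟨a, ha, hmin⟩ := Set.exists_min_image _ (PTree.lenFin ρ) (shell_finite T n)
    (shell_nonempty T n)
  exact ⟨a, ha.1, ha.2, le_iInf₂ fun b hb => hmin b hb⟩

/-- König-type lemma: if every shell contains an edge of `ρ`-length at most `B`,
then there is an infinite path of `ρ`-length at most `B`. -/
lemma exists_path_of_bound (B : ℝ≥0∞)
    (hB : ∀ n, ∃ e, T.mem e ∧ e.length = n ∧ PTree.lenFin ρ e ≤ B) :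
    ∃ f ∈ T.GammaInf, PTree.lenInf ρ f ≤ B := by
  classical
  set Good : List ℕ → Prop := fun e => T.mem e ∧ ∀ n, ∃ e', T.mem e' ∧
    e'.length = e.length + n ∧ e <+: e' ∧ PTree.lenFin ρ e' ≤ B with hGood
  have good_root : Good [] := by
    refine ⟨T.root_mem, fun n => ?_⟩
    obtain ⟨e, he, hl, hlen⟩ := hB n
    exact ⟨e, he, by simpa using hl, List.nil_prefix, hlen⟩
  have good_len : ∀ {e : List ℕ}, Good e → PTree.lenFin ρ e ≤ B := by
    intro e hge
    obtain ⟨e', he', hl', hp', hb'⟩ := hge.2 0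
    have : e = e' := hp'.eq_of_length (by omega)
    rw [this]; exact hb'
  have good_extend : ∀ {e : List ℕ}, Good e → ∃ a, Good (e ++ [a]) := by
    intro e hge
    by_contra hcon
    push_neg at hcon
    have hC : {a : ℕ | T.mem (e ++ [a])}.Finite := T.finite_children hge.1
    have key : ∀ a, T.mem (e ++ [a]) → ∃ n, ¬ ∃ e', T.mem e' ∧
        e'.length = (e ++ [a]).length + n ∧ (e ++ [a]) <+: e' ∧ PTree.lenFin ρ e' ≤ B := by
      intro a ha
      by_contra hk
      push_neg at hk
      exact hcon a ⟨ha, hk⟩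
    choose! g hgspec using key
    set N : ℕ := hC.toFinset.sup g with hN
    obtain ⟨e', he', hl', hp', hb'⟩ := hge.2 (N + 1)
    obtain ⟨a, hae⟩ := prefix_succ_exists hp' (by omega)
    have ham : T.mem (e ++ [a]) := T.prefix_closed hae he'
    have hga : g a ≤ N := Finset.le_sup (by simpa using ham)
    refine hgspec a ham ?_
    have h1 : e ++ [a] = e'.take (e.length + 1) := by
      have h2 := List.prefix_iff_eq_take.mp hae
      simpa using h2
    refine ⟨e'.take (e.length + 1 + g a),
      T.prefix_closed (List.take_prefix _ _) he', ?_, ?_, ?_⟩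
    · simp only [List.length_take, hl', List.length_append, List.length_singleton]
      omega
    · rw [h1]
      exact List.take_prefix_take_left (by omega)
    · exact le_trans (lenFin_le_of_prefix ρ (List.take_prefix _ _)) hb'
  -- build the infinite branch
  let step : {e : List ℕ // Good e} → {e : List ℕ // Good e} :=
    fun e => ⟨e.1 ++ [(good_extend e.2).choose], (good_extend e.2).choose_spec⟩
  let c : ℕ → {e : List ℕ // Good e} := fun n => step^[n] ⟨[], good_root⟩
  have hc_succ : ∀ n, (c (n + 1)).1 = (c n).1 ++ [(good_extend (c n).2).choose] := by
    intro n
    show (step^[n+1] _).1 = _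
    rw [Function.iterate_succ_apply']
  have hc_len : ∀ n, (c n).1.length = n := by
    intro n
    induction n with
    | zero => rfl
    | succ n ih => rw [hc_succ n]; simp [ih]
  set f : ℕ → ℕ := fun n => (good_extend (c n).2).choose with hf
  have hseg : ∀ n, seg f n = (c n).1 := by
    intro n
    induction n with
    | zero => rfl
    | succ n ih =>
      have : seg f (n + 1) = seg f n ++ [f n] := by
        simp [seg, List.range_succ]
      rw [this, ih, hc_succ n]
  refine ⟨f, fun n => by rw [hseg n]; exact (c n).2.1, ?_⟩
  rw [lenInf_eq_iSup]
  refine iSup_le fun n => ?_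
  rw [hseg n]
  exact good_len (c n).2

end Aux

/-- `n ↦ ℓ_ρ(Γ_n)` is non-decreasing and converges to `ℓ_ρ(Γ_∞)`. -/
theorem stmt1 (T : PTree) (ρ : List ℕ → ℝ≥0) :
    (∀ m n : ℕ, 1 ≤ m → m ≤ n → T.lenFam ρ m ≤ T.lenFam ρ n) ∧
    Filter.Tendsto (fun n : ℕ => T.lenFam ρ n) Filter.atTop
      (nhds (T.lenFamInf ρ)) := by
  have hmono : Monotone (T.lenFam ρ) := lenFam_mono T ρ
  have hle : ∀ n, T.lenFam ρ n ≤ T.lenFamInf ρ := by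
    intro n
    refine le_iInf₂ fun f hf => ?_
    refine le_trans (lenFam_le T ρ (hf n) (seg_length f n)) ?_
    rw [lenInf_eq_iSup]
    exact le_iSup (fun n => PTree.lenFin ρ (seg f n)) n
  have hkey : T.lenFamInf ρ = ⨆ n, T.lenFam ρ n := by
    refine le_antisymm ?_ (iSup_le hle)
    obtain ⟨f, hf, hfl⟩ := exists_path_of_bound T ρ (⨆ n, T.lenFam ρ n) (fun n => by
      obtain ⟨e, he, hl, hb⟩ := exists_min_shell T ρ n
      exact ⟨e, he, hl, hb.trans (le_iSup (T.lenFam ρ) n)⟩)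
    exact le_trans (biInf_le _ hf) hfl
  exact ⟨fun m n _ h => hmono h, hkey ▸ tendsto_atTop_iSup hmono⟩
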